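/- Distance-two-pair case of the proof of Theorem 2: let m ≥ 5 and r ∈ ZMod m. For every fault pattern F with w(F) ≤ 2 whose observed syndrome has supp s(F) = {r−1, r+1}, flipping data bits 2r+1 and 2r+3 leaves a residual error of weight at most w(F); that is, wt(e(F) + 1_{2r+1} + 1_{2r+3}) ≤ w(F), where 1_{j} denotes the indicator vector of the single data position j. -/
import Mathlib


open scoped Classical

namespace CutCat

/-- A fault in the cut-cat single-round fault model, located at cat qubit `r`. -/
inductive Fault (m : ℕ) where
  | pre  (r : ZMod m)
  | mid  (r : ZMod m)
  | post (r : ZMod m)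
  | meas (r : ZMod m)

variable {m : ℕ}

/-- The index (in `ZMod (2*m)`) of the data qubit `2r` coupled to cat qubit `r`. -/
def d0 (r : ZMod m) : ZMod (2 * m) := 2 * (r.val : ZMod (2 * m))

/-- The data-qubit error contributed by a single fault. -/
def Fault.dataErr : Fault m → ZMod (2 * m) → ZMod 2
  | .pre r  => fun q => (if q = d0 r then 1 else 0) + (if q = d0 r + 1 then 1 else 0)
  | .mid r  => fun q => if q = d0 r + 1 then 1 else 0
  | .post _ => 0
  | .meas _ => 0

/-- The cat-stabilizer syndrome contribution of a single fault
    (syndrome bit `j` checks cat qubits `j` and `j+1`). -/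
def Fault.syn : Fault m → ZMod m → ZMod 2
  | .pre r  => fun j => (if j = r - 1 then 1 else 0) + (if j = r then 1 else 0)
  | .mid r  => fun j => (if j = r - 1 then 1 else 0) + (if j = r then 1 else 0)
  | .post r => fun j => (if j = r - 1 then 1 else 0) + (if j = r then 1 else 0)
  | .meas r => fun j => if j = r then 1 else 0

/-- The data error `e(F)` of a fault pattern `F` (coordinatewise mod-2 sum). -/
def dataErr (F : Multiset (Fault m)) : ZMod (2 * m) → ZMod 2 :=
  (F.map Fault.dataErr).sum

/-- The observed syndrome `s(F)` of a fault pattern `F` (coordinatewise mod-2 sum). -/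
def synd (F : Multiset (Fault m)) : ZMod m → ZMod 2 :=
  (F.map Fault.syn).sum

/-- Hamming weight of a binary vector. -/
noncomputable def wt {n : ℕ} (f : ZMod n → ZMod 2) : ℕ := {i | f i ≠ 0}.ncard

/-- The set of triggered syndrome bits, `supp s(F)`. -/
def suppSyn (F : Multiset (Fault m)) : Set (ZMod m) := {j | synd F j = 1}

/-- Boundary of a set of cat qubits: checks `j` with exactly one of `j`, `j+1` in `E`. -/
def boundary (E : Set (ZMod m)) : Set (ZMod m) := {j | Xor' (j ∈ E) (j + 1 ∈ E)}

/-- Indicator (as a binary data vector) of the set `{2r+1 : r ∈ E}`. -/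
noncomputable def indicOdd (E : Set (ZMod m)) : ZMod (2 * m) → ZMod 2 :=
  fun q => if ∃ r ∈ E, q = d0 r + 1 then 1 else 0

/-- Indicator of a single data position `j`. -/
def indic {n : ℕ} (j : ZMod n) : ZMod n → ZMod 2 := fun q => if q = j then 1 else 0

/-- `c` is the correction output by the minimum-weight decoder with parameter `t`
    on syndrome `s(F)`: if there is a set `E` of at most `t` cat qubits whose
    boundary equals `supp s(F)`, then `c` is the indicator of `{2r+1 : r ∈ E}`;
    otherwise `c = 0`. -/
def IsDecoderCorrection (t : ℕ) (F : Multiset (Fault m)) (c : ZMod (2 * m) → ZMod 2) : Prop :=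
  (∃ E : Set (ZMod m), E.ncard ≤ t ∧ boundary E = suppSyn F ∧ c = indicOdd E) ∨
  ((¬ ∃ E : Set (ZMod m), E.ncard ≤ t ∧ boundary E = suppSyn F) ∧ c = 0)

/-- `true` iff the fault is a measurement fault. -/
def Fault.isMeas : Fault m → Bool
  | .meas _ => true
  | _ => false

end CutCat

namespace CutCatAux
open CutCat
variable {m : ℕ}

lemma natCast_ne_zero (hm : 5 ≤ m) {k : ℕ} (h1 : 0 < k) (h2 : k < m) : (k : ZMod m) ≠ 0 := by
  haveI : NeZero m := ⟨by omega⟩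
  intro h
  rw [ZMod.natCast_eq_zero_iff] at h
  exact absurd (Nat.le_of_dvd h1 h) (by omega)

lemma one_nz (hm : 5 ≤ m) : (1 : ZMod m) ≠ 0 := by
  simpa using natCast_ne_zero hm (k := 1) (by omega) (by omega)
lemma two_nz (hm : 5 ≤ m) : (2 : ZMod m) ≠ 0 := by
  simpa using natCast_ne_zero hm (k := 2) (by omega) (by omega)
lemma three_nz (hm : 5 ≤ m) : (3 : ZMod m) ≠ 0 := by
  simpa using natCast_ne_zero hm (k := 3) (by omega) (by omega)
lemma four_nz (hm : 5 ≤ m) : (4 : ZMod m) ≠ 0 := by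
  simpa using natCast_ne_zero hm (k := 4) (by omega) (by omega)

lemma sub_one_ne (hm : 5 ≤ m) (x : ZMod m) : x - 1 ≠ x :=
  fun h => one_nz hm (by linear_combination -h)

lemma key2 : ∀ x y : ZMod 2, x + y = 1 ↔ (x = 1 ↔ ¬ y = 1) := by decide

lemma ind2_eq_one_iff {a' a j : ZMod m} (h : a' ≠ a) :
    ((if j = a' then (1:ZMod 2) else 0) + (if j = a then 1 else 0)) = 1 ↔ (j = a' ∨ j = a) := by
  by_cases h1 : j = a' <;> by_cases h2 : j = a <;> simp_all

lemma ind1_eq_one_iff {a j : ZMod m} :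
    ((if j = a then (1:ZMod 2) else 0)) = 1 ↔ j = a := by
  by_cases h1 : j = a <;> simp_all

lemma adjpair_false (hm : 5 ≤ m) {c r : ZMod m}
    (hA : c - 1 = r - 1 ∨ c - 1 = r + 1) (hB : c = r - 1 ∨ c = r + 1) : False := by
  rcases hA with h | h <;> rcases hB with h' | h'
  · exact one_nz hm (by linear_combination h' - h)
  · exact one_nz hm (by linear_combination h - h')
  · exact three_nz hm (by linear_combination h' - h)
  · exact one_nz hm (by linear_combination h' - h)

lemma pairpair_main (hm : 5 ≤ m) (a b r : ZMod m)
    (H : ∀ j : ZMod m, ((j = a - 1 ∨ j = a) ↔ ¬(j = b - 1 ∨ j = b)) ↔ (j = r - 1 ∨ j = r + 1)) :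
    (a = r ∧ b = r + 1) ∨ (a = r + 1 ∧ b = r) := by
  have h1 := one_nz hm; have h2 := two_nz hm; have h3 := three_nz hm; have h4 := four_nz hm
  by_cases hab : a = b
  · exfalso; subst hab; have := (H (r - 1)).mpr (Or.inl rfl); tauto
  by_cases hba : b = a + 1
  · subst hba
    have i1 : a - 1 = r - 1 ∨ a - 1 = r + 1 := by
      refine (H (a - 1)).mp ?_
      have e1 : a - 1 ≠ a + 1 - 1 := by
        intro h; exact (sub_one_ne hm a) (by linear_combination h)
      have e2 : a - 1 ≠ a + 1 := fun h => h2 (by linear_combination -h)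
      simp [e1, e2, h1]
    have i2 : a + 1 = r - 1 ∨ a + 1 = r + 1 := by
      refine (H (a + 1)).mp ?_
      have e1 : a + 1 ≠ a - 1 := fun h => h2 (by linear_combination h)
      have e2 : a + 1 ≠ a := fun h => h1 (by linear_combination h)
      simp [e1, e2, h1, h2]
    rcases i1 with h | h
    · exact Or.inl ⟨by linear_combination h, by linear_combination h⟩
    · exfalso
      rcases i2 with h' | h'
      · exact h4 (by linear_combination h' - h)
      · exact h2 (by linear_combination h' - h)
  by_cases hba2 : a = b + 1
  · subst hba2
    have i1 : b + 1 = r - 1 ∨ b + 1 = r + 1 := by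
      refine (H (b + 1)).mp ?_
      have e1 : b + 1 ≠ b + 1 - 1 := by
        intro h; exact h1 (by linear_combination h)
      have e2 : b + 1 ≠ b - 1 := fun h => h2 (by linear_combination h)
      have e3 : b + 1 ≠ b := fun h => h1 (by linear_combination h)
      simp [e1, e2, e3, h1, h2]
    have i2 : b - 1 = r - 1 ∨ b - 1 = r + 1 := by
      refine (H (b - 1)).mp ?_
      have e1 : b - 1 ≠ b + 1 - 1 := by
        intro h; exact (sub_one_ne hm b) (by linear_combination h)
      have e2 : b - 1 ≠ b + 1 := fun h => h2 (by linear_combination -h)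
      simp [e1, e2, sub_one_ne hm b, h1, h2]
    rcases i1 with h | h
    · exfalso
      rcases i2 with h' | h'
      · exact h2 (by linear_combination h - h')
      · exact h4 (by linear_combination h - h')
    · exact Or.inr ⟨by linear_combination h, by linear_combination h⟩
  · exfalso
    have i1 : a - 1 = r - 1 ∨ a - 1 = r + 1 := by
      refine (H (a - 1)).mp ?_
      have e1 : a - 1 ≠ b - 1 := fun h => hab (by linear_combination h)
      have e2 : a - 1 ≠ b := fun h => hba2 (by linear_combination h)
      simp [e1, e2, h1, h2]
    have i2 : a = r - 1 ∨ a = r + 1 := by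
      refine (H a).mp ?_
      have e1 : a ≠ b - 1 := fun h => hba (by linear_combination -h)
      simp [e1, hab, h1, h2]
    exact adjpair_false hm i1 i2

lemma measpair_main (hm : 5 ≤ m) (a b r : ZMod m)
    (H : ∀ j : ZMod m, ((j = a) ↔ ¬(j = b - 1 ∨ j = b)) ↔ (j = r - 1 ∨ j = r + 1)) : False := by
  have h1 := one_nz hm; have h2 := two_nz hm
  by_cases hab1 : a = b - 1
  · subst hab1
    have k1 : r - 1 = b := by
      have h := (H (r - 1)).mpr (Or.inl rfl)
      by_cases c2 : r - 1 = b
      · exact c2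
      · exfalso; by_cases c1 : r - 1 = b - 1 <;> simp [c1, c2] at h
    have k2 : r + 1 = b := by
      have h := (H (r + 1)).mpr (Or.inr rfl)
      by_cases c2 : r + 1 = b
      · exact c2
      · exfalso; by_cases c1 : r + 1 = b - 1 <;> simp [c1, c2] at h
    exact h2 (by linear_combination k2 - k1)
  by_cases hab2 : a = b
  · subst hab2
    have k1 : r - 1 = a - 1 := by
      have h := (H (r - 1)).mpr (Or.inl rfl)
      by_cases c1 : r - 1 = a - 1
      · exact c1
      · exfalso; by_cases c2 : r - 1 = a <;> simp [c1, c2, sub_one_ne hm a] at h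
    have k2 : r + 1 = a - 1 := by
      have h := (H (r + 1)).mpr (Or.inr rfl)
      by_cases c1 : r + 1 = a - 1
      · exact c1
      · exfalso; by_cases c2 : r + 1 = a <;> simp [c1, c2, sub_one_ne hm a] at h
    exact h2 (by linear_combination k2 - k1)
  · have i1 : b - 1 = r - 1 ∨ b - 1 = r + 1 := by
      refine (H (b - 1)).mp ?_
      have e1 : b - 1 ≠ a := fun h => hab1 h.symm
      simp [e1, h1, h2, sub_one_ne hm b]
    have i2 : b = r - 1 ∨ b = r + 1 := by
      refine (H b).mp ?_
      have e1 : b ≠ a := fun h => hab2 h.symm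
      have e2 : b ≠ b - 1 := fun h => (sub_one_ne hm b) h.symm
      simp [e1, e2, h1, h2]
    exact adjpair_false hm i1 i2

lemma singlepair_main (hm : 5 ≤ m) (a r : ZMod m)
    (H : ∀ j : ZMod m, (j = a - 1 ∨ j = a) ↔ (j = r - 1 ∨ j = r + 1)) : False :=
  adjpair_false hm ((H (a - 1)).mp (Or.inl rfl)) ((H a).mp (Or.inr rfl))

lemma singlemeas_main (hm : 5 ≤ m) (a r : ZMod m)
    (H : ∀ j : ZMod m, (j = a) ↔ (j = r - 1 ∨ j = r + 1)) : False := by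
  have k1 := (H (r - 1)).mpr (Or.inl rfl)
  have k2 := (H (r + 1)).mpr (Or.inr rfl)
  exact two_nz hm (by linear_combination k2 - k1)

end CutCatAux

namespace CutCatAux2
open CutCat CutCatAux
variable {m : ℕ}

lemma wt_le_two {n : ℕ} (h : ZMod n → ZMod 2) (p q : ZMod n)
    (hs : ∀ i, h i ≠ 0 → i = p ∨ i = q) : wt h ≤ 2 := by
  have hsub : {i | h i ≠ 0} ⊆ {p, q} := fun i hi => hs i hi
  calc wt h ≤ ({p, q} : Set (ZMod n)).ncard := Set.ncard_le_ncard hsub (Set.toFinite _)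
    _ ≤ 2 := by simpa using Set.ncard_insert_le p ({q} : Set (ZMod n))

lemma d0_succ (hm : 5 ≤ m) (r : ZMod m) : d0 (r + 1) = d0 r + 2 := by
  haveI : NeZero m := ⟨by omega⟩
  unfold d0
  have key : ((r + 1).val : ZMod (2 * m)) * 2 = (r.val : ZMod (2 * m)) * 2 + 2 := by
    have hmod : ((r + 1).val) ≡ r.val + 1 [MOD m] := by
      rw [ZMod.val_add]
      simpa [ZMod.val_one_eq_one_mod] using
        (Nat.mod_modEq (r.val + (1 : ZMod m).val) m).trans
          (by rw [ZMod.val_one_eq_one_mod]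
              exact (Nat.ModEq.refl _).add_right _ |>.trans ((Nat.mod_modEq 1 m).add_left r.val))
    have h2 : (r + 1).val * 2 ≡ (r.val + 1) * 2 [MOD m * 2] := hmod.mul_right' 2
    have h3 := (ZMod.natCast_eq_natCast_iff _ _ _).mpr h2
    push_cast at h3
    rw [show m * 2 = 2 * m by ring] at h3
    linear_combination h3
  linear_combination key

lemma one_nz2m (hm : 5 ≤ m) : (1 : ZMod (2 * m)) ≠ 0 := by
  have h : ((1 : ℕ) : ZMod (2 * m)) ≠ 0 := by
    haveI : NeZero (2 * m) := ⟨by omega⟩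
    intro h
    rw [ZMod.natCast_eq_zero_iff] at h
    have := Nat.le_of_dvd (by omega) h
    omega
  simpa using h

lemma res_of (hm : 5 ≤ m) (f : Fault m) (a : ZMod m)
    (hf : f = .pre a ∨ f = .mid a ∨ f = .post a) :
    ∃ p, ∀ q, Fault.dataErr f q + indic (d0 a + 1) q ≠ 0 → q = p := by
  rcases hf with rfl | rfl | rfl
  · refine ⟨d0 a, fun q hq => ?_⟩
    by_cases h1 : q = d0 a
    · exact h1
    · exfalso; apply hq
      by_cases h2 : q = d0 a + 1 <;> simp [Fault.dataErr, indic, h1, h2, one_nz2m hm] <;> decide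
  · refine ⟨d0 a, fun q hq => ?_⟩
    exfalso; apply hq
    by_cases h2 : q = d0 a + 1 <;> simp [Fault.dataErr, indic, h2, one_nz2m hm] <;> decide
  · refine ⟨d0 a + 1, fun q hq => ?_⟩
    by_cases h2 : q = d0 a + 1
    · exact h2
    · exfalso; apply hq; simp [Fault.dataErr, indic, h2]

lemma res_meas (a : ZMod m) (c : ZMod (2 * m)) :
    ∃ p, ∀ q, Fault.dataErr (Fault.meas a) q + indic c q ≠ 0 → q = p := by
  refine ⟨c, fun q hq => ?_⟩
  by_cases h2 : q = c
  · exact h2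
  · exfalso; apply hq; simp [Fault.dataErr, indic, h2]

lemma finish (hm : 5 ≤ m) (r : ZMod m) (f g : Fault m)
    (hf : ∃ p, ∀ q, Fault.dataErr f q + indic (d0 r + 1) q ≠ 0 → q = p)
    (hg : ∃ p, ∀ q, Fault.dataErr g q + indic (d0 (r + 1) + 1) q ≠ 0 → q = p) :
    wt (dataErr {f, g} + indic (d0 r + 1) + indic (d0 r + 3)) ≤ 2 := by
  obtain ⟨p, hp⟩ := hf
  obtain ⟨p', hp'⟩ := hg
  apply wt_le_two _ p p'
  intro i hi
  have hd : d0 (r + 1) + 1 = d0 r + 3 := by rw [d0_succ hm]; ring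
  have he : (dataErr {f, g} + indic (d0 r + 1) + indic (d0 r + 3) : ZMod (2 * m) → ZMod 2) i
      = (Fault.dataErr f i + indic (d0 r + 1) i)
        + (Fault.dataErr g i + indic (d0 (r + 1) + 1) i) := by
    rw [hd]
    simp only [dataErr, Multiset.insert_eq_cons, Multiset.map_cons, Multiset.map_singleton,
      Multiset.sum_cons, Multiset.sum_singleton, Pi.add_apply]
    ring
  rw [he] at hi
  by_cases c1 : Fault.dataErr f i + indic (d0 r + 1) i = 0
  · refine Or.inr (hp' i ?_)
    intro h0; exact hi (by rw [c1, h0, add_zero])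
  · exact Or.inl (hp i c1)

end CutCatAux2

/-- Distance-two-pair case of the proof of Theorem 2: if `w(F) ≤ 2` and the
triggered stabilizers are exactly `{r-1, r+1}`, then flipping data bits
`2r+1` and `2r+3` leaves a residual error of weight at most `w(F)`. -/
theorem cutcat_d5_distance_two_pair (m : ℕ) (hm : 5 ≤ m) (r : ZMod m)
    (F : Multiset (CutCat.Fault m)) (hF : Multiset.card F ≤ 2)
    (hs : CutCat.suppSyn F = {r - 1, r + 1}) :
    CutCat.wt (CutCat.dataErr F + CutCat.indic (CutCat.d0 r + 1)
        + CutCat.indic (CutCat.d0 r + 3)) ≤ Multiset.card F := by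
  classical
  have hs' : ∀ j, CutCat.synd F j = 1 ↔ (j = r - 1 ∨ j = r + 1) := by
    intro j
    have h := Set.ext_iff.mp hs j
    simpa [CutCat.suppSyn] using h
  have classify : ∀ f : CutCat.Fault m,
      (∃ a, (∀ j, CutCat.Fault.syn f j
          = (if j = a - 1 then (1 : ZMod 2) else 0) + (if j = a then 1 else 0))
        ∧ (f = .pre a ∨ f = .mid a ∨ f = .post a))
      ∨ (∃ a, f = .meas a) := by
    intro f
    cases f with
    | pre a => exact Or.inl ⟨a, fun j => rfl, Or.inl rfl⟩
    | mid a => exact Or.inl ⟨a, fun j => rfl, Or.inr (Or.inl rfl)⟩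
    | post a => exact Or.inl ⟨a, fun j => rfl, Or.inr (Or.inr rfl)⟩
    | meas a => exact Or.inr ⟨a, rfl⟩
  have hcard : Multiset.card F = 0 ∨ Multiset.card F = 1 ∨ Multiset.card F = 2 := by omega
  rcases hcard with h0 | h1 | h2
  · exfalso
    rw [Multiset.card_eq_zero] at h0
    subst h0
    have h := (hs' (r - 1)).mpr (Or.inl rfl)
    have h2 : (0 : ZMod 2) = 1 := by simpa [CutCat.synd] using h
    exact absurd h2 (by decide)
  · exfalso
    rw [Multiset.card_eq_one] at h1
    obtain ⟨f, rfl⟩ := h1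
    have hsf : ∀ j, CutCat.Fault.syn f j = 1 ↔ (j = r - 1 ∨ j = r + 1) := by
      intro j
      rw [← hs' j]
      have h : CutCat.synd {f} j = CutCat.Fault.syn f j := by simp [CutCat.synd]
      rw [h]
    rcases classify f with ⟨a, hsyn, _⟩ | ⟨a, rfl⟩
    · apply CutCatAux.singlepair_main hm a r
      intro j
      rw [← hsf j, hsyn j, CutCatAux.ind2_eq_one_iff (CutCatAux.sub_one_ne hm a)]
    · apply CutCatAux.singlemeas_main hm a r
      intro j
      rw [← hsf j]
      exact (CutCatAux.ind1_eq_one_iff).symm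
  · rw [Multiset.card_eq_two] at h2
    obtain ⟨f, g, rfl⟩ := h2
    have hs2 : ∀ j, CutCat.Fault.syn f j + CutCat.Fault.syn g j = 1
        ↔ (j = r - 1 ∨ j = r + 1) := by
      intro j
      rw [← hs' j]
      have h : CutCat.synd {f, g} j = CutCat.Fault.syn f j + CutCat.Fault.syn g j := by
        simp [CutCat.synd, Multiset.insert_eq_cons]
      rw [h]
    have hcard2 : Multiset.card ({f, g} : Multiset (CutCat.Fault m)) = 2 := by simp
    rw [hcard2]
    rcases classify f with ⟨a, hfs, hfl⟩ | ⟨a, rfl⟩ <;>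
      rcases classify g with ⟨b, hgs, hgl⟩ | ⟨b, rfl⟩
    · -- pair–pair
      have H : ∀ j, ((j = a - 1 ∨ j = a) ↔ ¬(j = b - 1 ∨ j = b))
          ↔ (j = r - 1 ∨ j = r + 1) := by
        intro j
        rw [← hs2 j, hfs j, hgs j, CutCatAux.key2,
          CutCatAux.ind2_eq_one_iff (CutCatAux.sub_one_ne hm a),
          CutCatAux.ind2_eq_one_iff (CutCatAux.sub_one_ne hm b)]
      rcases CutCatAux.pairpair_main hm a b r H with ⟨ha, hb⟩ | ⟨ha, hb⟩
      · rw [ha] at hfl; rw [hb] at hgl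
        exact CutCatAux2.finish hm r f g (CutCatAux2.res_of hm f r hfl)
          (CutCatAux2.res_of hm g (r + 1) hgl)
      · rw [ha] at hfl; rw [hb] at hgl
        have hsw : ({f, g} : Multiset (CutCat.Fault m)) = {g, f} := Multiset.cons_swap f g 0
        rw [hsw]
        exact CutCatAux2.finish hm r g f (CutCatAux2.res_of hm g r hgl)
          (CutCatAux2.res_of hm f (r + 1) hfl)
    · -- pair–meas
      exfalso
      apply CutCatAux.measpair_main hm b a r
      intro j
      have h := hs2 j
      rw [hfs j, CutCatAux.key2,
        CutCatAux.ind2_eq_one_iff (CutCatAux.sub_one_ne hm a),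
        show (CutCat.Fault.syn (.meas b) j = 1) ↔ j = b from CutCatAux.ind1_eq_one_iff] at h
      rw [← h]
      tauto
    · -- meas–pair
      exfalso
      apply CutCatAux.measpair_main hm a b r
      intro j
      have h := hs2 j
      rw [hgs j, CutCatAux.key2,
        show (CutCat.Fault.syn (.meas a) j = 1) ↔ j = a from CutCatAux.ind1_eq_one_iff,
        CutCatAux.ind2_eq_one_iff (CutCatAux.sub_one_ne hm b)] at h
      exact h
    · -- meas–meas
      exact CutCatAux2.finish hm r _ _ (CutCatAux2.res_meas a _) (CutCatAux2.res_meas b _)
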